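/- Let x ∈ ℝ^N be zero-mean with covariance C_x, ȳ ∈ ℝ^M zero-mean with covariance C_ȳ, and E = E[ȳ xᵀ] with E having linearly independent columns. Then the LS estimator x̂ = C_x E⁺ ȳ, with E⁺ = (EᵀE)^{-1}Eᵀ, has mean-squared error E[‖x − x̂‖²] = tr(C_x E⁺ C_ȳ (E⁺)ᵀ C_x − C_x). -/

import Mathlib

open MeasureTheory ProbabilityTheory Real Matrix Filter

noncomputable def stdNormalCDF (t : ℝ) : ℝ :=
  ∫ s in Set.Iic t, (Real.sqrt (2 * Real.pi))⁻¹ * Real.exp (-(s ^ 2) / 2)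

noncomputable def stdNormalPDF (t : ℝ) : ℝ :=
  (Real.sqrt (2 * Real.pi))⁻¹ * Real.exp (-(t ^ 2) / 2)

noncomputable def probitSigmoid (σ t : ℝ) : ℝ := 2 * stdNormalCDF (t / σ) - 1

noncomputable def sgn (t : ℝ) : ℝ := if 0 ≤ t then 1 else -1

private lemma expand_sq (a : ℝ) {M : ℕ} (b : Fin M → ℝ) :
    (a - ∑ k, b k)^2 = a*a - 2*(∑ k, b k * a) + ∑ k, ∑ l, b k * b l := by
  rw [sub_sq, sq (∑ k, b k), Finset.sum_mul_sum, Finset.mul_sum (a := 2*a),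
    Finset.mul_sum (a := (2:ℝ))]
  ring_nf

theorem stmt11 {N M : ℕ} {Ω : Type*} [MeasurableSpace Ω] (μ : Measure Ω) [IsProbabilityMeasure μ]
    (x : Ω → Fin N → ℝ) (y : Ω → Fin M → ℝ)
    (hx : Measurable x) (hy : Measurable y)
    (hxmean : ∀ j, ∫ ω, x ω j ∂μ = 0) (hymean : ∀ i, ∫ ω, y ω i ∂μ = 0)
    (hx2 : ∀ i j, Integrable (fun ω => x ω i * x ω j) μ)
    (hy2 : ∀ i j, Integrable (fun ω => y ω i * y ω j) μ)
    (hxy : ∀ i j, Integrable (fun ω => y ω i * x ω j) μ)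
    (Cx : Matrix (Fin N) (Fin N) ℝ)
    (hCx : Cx = Matrix.of fun i j => ∫ ω, x ω i * x ω j ∂μ)
    (Cy : Matrix (Fin M) (Fin M) ℝ)
    (hCy : Cy = Matrix.of fun i j => ∫ ω, y ω i * y ω j ∂μ)
    (E : Matrix (Fin M) (Fin N) ℝ)
    (hE : E = Matrix.of fun i j => ∫ ω, y ω i * x ω j ∂μ)
    (hrank : IsUnit (Eᵀ * E).det)
    (Epinv : Matrix (Fin N) (Fin M) ℝ)
    (hEpinv : Epinv = (Eᵀ * E)⁻¹ * Eᵀ) :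
    ∫ ω, ∑ i, (x ω i - (Cx * Epinv).mulVec (y ω) i) ^ 2 ∂μ =
      Matrix.trace (Cx * Epinv * Cy * Epinvᵀ * Cx - Cx) := by
  set A := Cx * Epinv with hA
  -- Cx is symmetric
  have hCxsymm : Cxᵀ = Cx := by
    rw [hCx]; ext i j
    simp only [Matrix.transpose_apply, Matrix.of_apply]
    exact integral_congr_ae (Filter.Eventually.of_forall fun ω => mul_comm _ _)
  -- A * E = Cx
  have hAE : A * E = Cx := by
    rw [hA, hEpinv, Matrix.mul_assoc Cx, Matrix.mul_assoc _ Eᵀ E,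
      Matrix.nonsing_inv_mul _ hrank, Matrix.mul_one]
  -- pointwise expansion
  have hpt : ∀ ω, ∑ i, (x ω i - A.mulVec (y ω) i) ^ 2 =
      (∑ i, x ω i * x ω i) - 2 * (∑ i, ∑ k, A i k * (y ω k * x ω i))
        + ∑ i, ∑ k, ∑ l, (A i k * A i l) * (y ω k * y ω l) := by
    intro ω
    have step : ∀ i, (x ω i - A.mulVec (y ω) i) ^ 2 =
        x ω i * x ω i - 2 * (∑ k, A i k * (y ω k * x ω i))
          + ∑ k, ∑ l, (A i k * A i l) * (y ω k * y ω l) := by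
      intro i
      have hv : A.mulVec (y ω) i = ∑ k, A i k * y ω k := by
        simp [Matrix.mulVec, dotProduct]
      rw [hv, expand_sq]
      have h1 : ∑ k, A i k * y ω k * x ω i = ∑ k, A i k * (y ω k * x ω i) :=
        Finset.sum_congr rfl fun k _ => mul_assoc _ _ _
      have h2 : ∑ k, ∑ l, A i k * y ω k * (A i l * y ω l)
          = ∑ k, ∑ l, (A i k * A i l) * (y ω k * y ω l) :=
        Finset.sum_congr rfl fun k _ => Finset.sum_congr rfl fun l _ => by ring
      rw [h1, h2]
    simp_rw [step]
    rw [Finset.sum_add_distrib, Finset.sum_sub_distrib, ← Finset.mul_sum]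
  -- integrability
  have hI1 : Integrable (fun ω => ∑ i, x ω i * x ω i) μ :=
    integrable_finset_sum _ fun i _ => hx2 i i
  have hI2 : Integrable (fun ω => ∑ i, ∑ k, A i k * (y ω k * x ω i)) μ :=
    integrable_finset_sum _ fun i _ => integrable_finset_sum _ fun k _ => (hxy k i).const_mul _
  have hI3 : Integrable (fun ω => ∑ i, ∑ k, ∑ l, (A i k * A i l) * (y ω k * y ω l)) μ :=
    integrable_finset_sum _ fun i _ => integrable_finset_sum _ fun k _ =>
      integrable_finset_sum _ fun l _ => (hy2 k l).const_mul _
  -- split the integral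
  have hsplit : ∫ ω, ∑ i, (x ω i - A.mulVec (y ω) i) ^ 2 ∂μ =
      (∫ ω, ∑ i, x ω i * x ω i ∂μ) - 2 * (∫ ω, ∑ i, ∑ k, A i k * (y ω k * x ω i) ∂μ)
        + ∫ ω, ∑ i, ∑ k, ∑ l, (A i k * A i l) * (y ω k * y ω l) ∂μ := by
    have hI2' : Integrable (fun ω => 2 * (∑ i, ∑ k, A i k * (y ω k * x ω i))) μ :=
      hI2.const_mul 2
    have hI12 : Integrable (fun ω => (∑ i, x ω i * x ω i)
        - 2 * (∑ i, ∑ k, A i k * (y ω k * x ω i))) μ := hI1.sub hI2'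
    simp_rw [hpt]
    rw [integral_add hI12 hI3, integral_sub hI1 hI2', integral_const_mul]
  rw [hsplit]
  -- compute the three integrals
  have hT1 : ∫ ω, ∑ i, x ω i * x ω i ∂μ = Matrix.trace Cx := by
    rw [integral_finset_sum _ fun i _ => hx2 i i, Matrix.trace, hCx]
    exact Finset.sum_congr rfl fun i _ => rfl
  have hT2 : ∫ ω, ∑ i, ∑ k, A i k * (y ω k * x ω i) ∂μ = Matrix.trace (A * E) := by
    rw [integral_finset_sum _ fun i _ => integrable_finset_sum _ fun k _ => (hxy k i).const_mul (A i k)]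
    rw [Matrix.trace]
    refine Finset.sum_congr rfl fun i _ => ?_
    rw [integral_finset_sum _ fun k _ => (hxy k i).const_mul (A i k)]
    simp only [Matrix.diag_apply, Matrix.mul_apply, hE, Matrix.of_apply]
    exact Finset.sum_congr rfl fun k _ => integral_const_mul _ _
  have hT3 : ∫ ω, ∑ i, ∑ k, ∑ l, (A i k * A i l) * (y ω k * y ω l) ∂μ =
      Matrix.trace (A * Cy * Aᵀ) := by
    rw [integral_finset_sum _ fun i _ => integrable_finset_sum _ fun k _ =>
      integrable_finset_sum _ fun l _ => (hy2 k l).const_mul _]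
    rw [Matrix.trace]
    refine Finset.sum_congr rfl fun i _ => ?_
    rw [integral_finset_sum _ fun k _ => integrable_finset_sum _ fun l _ => (hy2 k l).const_mul _]
    simp only [Matrix.diag_apply, Matrix.mul_apply, Matrix.transpose_apply, Finset.sum_mul, hCy,
      Matrix.of_apply]
    rw [Finset.sum_comm]
    refine Finset.sum_congr rfl fun l _ => ?_
    rw [integral_finset_sum _ fun k _ => (hy2 l k).const_mul _]
    refine Finset.sum_congr rfl fun k _ => ?_
    rw [integral_const_mul]
    ring
  rw [hT1, hT2, hT3, hAE]
  -- right-hand side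
  have hR : Cx * Epinv * Cy * Epinvᵀ * Cx = A * Cy * Aᵀ := by
    rw [hA, Matrix.transpose_mul, hCxsymm, ← Matrix.mul_assoc]
  rw [Matrix.trace_sub, hR]
  ring
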